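/- Let X be a nonempty subset of the real line ℝ with d_H(X, ℝ) < ∞ (equivalently, X is an ε-net in ℝ for some finite ε). Then the ultrametric pseudodiameter of X (in the induced metric) satisfies diam_u X = 2·d_H(X, ℝ). -/

import Mathlib

open scoped ENNReal NNReal

noncomputable section

/-- Ultrametric pseudodistance: infimum over chains from `x` to `y` of the
maximal edge length of the chain. -/
noncomputable def ultraDist {X : Type*} [MetricSpace X] (x y : X) : ℝ≥0∞ :=
  ⨅ (n : ℕ) (f : Fin (n + 1) → X) (_ : f 0 = x) (_ : f (Fin.last n) = y),
    ⨆ i : Fin n, edist (f i.castSucc) (f i.succ)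

/-- Ultrametric pseudodiameter. -/
noncomputable def ultraDiam (X : Type*) [MetricSpace X] : ℝ≥0∞ :=
  ⨆ (x : X) (y : X), ultraDist x y

/-- A correspondence between `X` and `Y`: a relation whose projections are surjective. -/
def IsCorrespondence {X Y : Type*} (R : Set (X × Y)) : Prop :=
  (∀ x : X, ∃ y : Y, (x, y) ∈ R) ∧ (∀ y : Y, ∃ x : X, (x, y) ∈ R)

/-- Distortion of a relation. -/
noncomputable def distortion {X Y : Type*} [MetricSpace X] [MetricSpace Y]
    (R : Set (X × Y)) : ℝ≥0∞ :=
  ⨆ (p ∈ R) (q ∈ R), ENNReal.ofReal |dist p.1 q.1 - dist p.2 q.2|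

/-- Gromov–Hausdorff distance: half the infimal distortion of correspondences. -/
noncomputable def ghDist (X Y : Type*) [MetricSpace X] [MetricSpace Y] : ℝ≥0∞ :=
  (⨅ (R : Set (X × Y)) (_ : IsCorrespondence R), distortion R) / 2


private lemma myAux_upper (X : Set ℝ) (hfin : EMetric.hausdorffEdist X (Set.univ : Set ℝ) ≠ ⊤) :
    ultraDiam X ≤ 2 * EMetric.hausdorffEdist X (Set.univ : Set ℝ) := by
  set H := EMetric.hausdorffEdist X (Set.univ : Set ℝ) with hHdef
  have hle : ∀ r : ℝ, EMetric.infEdist r X ≤ H := by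
    intro r
    have := EMetric.infEdist_le_hausdorffEdist_of_mem (x := r) (t := X)
      (Set.mem_univ r)
    rwa [EMetric.hausdorffEdist_comm] at this
  refine iSup_le fun x => iSup_le fun y => ?_
  refine ENNReal.le_of_forall_pos_le_add fun ε hε h2top => ?_
  set δ : ℝ≥0 := ε / 3 with hδdef
  have hδpos : 0 < δ := by positivity
  have hδr : (0:ℝ) < (δ:ℝ) := hδpos
  set a : ℝ := (x : ℝ)
  set b : ℝ := (y : ℝ)
  -- choose n
  obtain ⟨n, hn⟩ := exists_nat_gt (|b - a| / (δ:ℝ))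
  have hnpos : (0:ℝ) < (n:ℝ) + 1 := by positivity
  have hgap : |b - a| / ((n:ℝ) + 1) ≤ (δ:ℝ) := by
    rw [div_le_iff₀ hnpos]
    have : |b - a| < (δ:ℝ) * n := by
      rw [div_lt_iff₀ hδr] at hn; linarith
    nlinarith [abs_nonneg (b - a)]
  set r : ℕ → ℝ := fun k => a + (k : ℝ) * (b - a) / ((n:ℝ) + 1) with hrdef
  have hr0 : r 0 = a := by simp [hrdef]
  have hrn : r (n + 1) = b := by
    show a + ((n+1:ℕ):ℝ) * (b - a) / ((n:ℝ)+1) = b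
    push_cast
    rw [mul_div_cancel_left₀ _ hnpos.ne']; ring
  have hrstep : ∀ k : ℕ, |r k - r (k + 1)| = |b - a| / ((n:ℝ) + 1) := by
    intro k
    have : r k - r (k + 1) = -((b - a) / ((n:ℝ) + 1)) := by
      simp only [hrdef]; push_cast; ring
    rw [this, abs_neg, abs_div, abs_of_pos hnpos]
  have hHδ : H < H + δ := ENNReal.lt_add_right hfin (by exact_mod_cast hδpos.ne')
  have hpick : ∀ k : ℕ, ∃ z : X, edist (z : ℝ) (r k) < H + δ := by
    intro k
    have : EMetric.infEdist (r k) X < H + δ := lt_of_le_of_lt (hle (r k)) hHδ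
    have this := EMetric.infEdist_lt_iff.mp this
    obtain ⟨z, hz, hzd⟩ := this
    exact ⟨⟨z, hz⟩, by rwa [edist_comm]⟩
  choose pick hpickd using hpick
  set g : ℕ → X := fun k => if k = 0 then x else if n + 1 ≤ k then y else pick k with hgdef
  have hg0 : g 0 = x := by simp [hgdef]
  have hgn : g (n + 1) = y := by simp [hgdef]
  have hQ : ∀ k ≤ n + 1, edist ((g k : ℝ)) (r k) ≤ H + δ := by
    intro k hk
    rcases eq_or_ne k 0 with rfl | hk0
    · rw [hg0, hr0]; simp [a]
    rcases eq_or_ne k (n + 1) with rfl | hkn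
    · rw [hgn, hrn]; simp [b]
    · have : g k = pick k := by
        simp only [hgdef]
        rw [if_neg hk0, if_neg (by omega)]
      rw [this]
      exact (hpickd k).le
  have hedge : ∀ k < n + 1, edist (g k) (g (k + 1)) ≤ 2 * H + ε := by
    intro k hk
    have h1 : edist (g k) (g (k + 1)) = edist ((g k : ℝ)) ((g (k+1) : ℝ)) := rfl
    have hmid : edist (r k) (r (k + 1)) ≤ (δ : ℝ≥0∞) := by
      rw [edist_dist, Real.dist_eq, hrstep k]
      calc ENNReal.ofReal (|b - a| / ((n:ℝ) + 1)) ≤ ENNReal.ofReal (δ:ℝ) :=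
            ENNReal.ofReal_le_ofReal hgap
        _ = (δ : ℝ≥0∞) := ENNReal.ofReal_coe_nnreal
    calc edist (g k) (g (k + 1))
        ≤ edist ((g k : ℝ)) (r k) + edist (r k) (r (k+1)) + edist (r (k+1)) ((g (k+1) : ℝ)) := by
          rw [h1]; exact edist_triangle4 _ _ _ _
      _ ≤ (H + δ) + δ + (H + δ) := by
          refine add_le_add (add_le_add (hQ k (by omega)) hmid) ?_
          rw [edist_comm]; exact hQ (k+1) (by omega)
      _ = 2 * H + ((δ : ℝ≥0∞) + δ + δ) := by ring
      _ = 2 * H + ε := by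
          congr 1
          rw [← ENNReal.coe_add, ← ENNReal.coe_add]
          congr 1
          apply NNReal.coe_injective
          push_cast [hδdef]
          ring
  have key : ultraDist x y ≤ ⨆ i : Fin (n + 1), edist ((fun i : Fin (n+2) => g i.val) i.castSucc)
      ((fun i : Fin (n+2) => g i.val) i.succ) := by
    refine iInf_le_of_le (n + 1) (iInf_le_of_le (fun i => g i.val) (iInf_le_of_le ?_ (iInf_le_of_le ?_ le_rfl)))
    · exact hg0
    · exact hgn
  refine key.trans (iSup_le fun i => ?_)
  simpa using hedge i.val i.isLt

private lemma myAux_nat_step {p : ℕ → Prop} : ∀ n : ℕ, p 0 → ¬ p n → ∃ k, k < n ∧ p k ∧ ¬ p (k+1) := by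
  intro n h0 hn
  induction n with
  | zero => exact absurd h0 hn
  | succ m ih =>
    by_cases hm : p m
    · exact ⟨m, Nat.lt_succ_self m, hm, hn⟩
    · obtain ⟨k, hk, h⟩ := ih hm
      exact ⟨k, hk.trans (Nat.lt_succ_self m), h⟩

private lemma myAux_lower (X : Set ℝ) (hfin : EMetric.hausdorffEdist X (Set.univ : Set ℝ) ≠ ⊤) :
    2 * EMetric.hausdorffEdist X (Set.univ : Set ℝ) ≤ ultraDiam X := by
  set H := EMetric.hausdorffEdist X (Set.univ : Set ℝ) with hHdef
  have hle : ∀ s : ℝ, EMetric.infEdist s X ≤ H := by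
    intro s
    have := EMetric.infEdist_le_hausdorffEdist_of_mem (x := s) (t := X) (Set.mem_univ s)
    rwa [EMetric.hausdorffEdist_comm] at this
  have key : ∀ t : ℝ≥0, (t : ℝ≥0∞) < H → 2 * (t : ℝ≥0∞) ≤ ultraDiam X := by
    intro t ht
    -- find a point far from X
    obtain ⟨r, hr⟩ : ∃ r : ℝ, (t : ℝ≥0∞) < EMetric.infEdist r X := by
      by_contra hcon
      push_neg at hcon
      have : H ≤ (t : ℝ≥0∞) := by
        apply EMetric.hausdorffEdist_le_of_infEdist
        · intro z hz
          rw [EMetric.infEdist_zero_of_mem (Set.mem_univ z)]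
          exact zero_le
        · intro s _
          exact hcon s
      exact absurd (lt_of_lt_of_le ht this) (lt_irrefl _)
    have hside : ∀ z ∈ X, z < r - (t:ℝ) ∨ r + (t:ℝ) < z := by
      intro z hz
      have h1 : (t : ℝ≥0∞) < edist r z :=
        lt_of_lt_of_le hr (EMetric.infEdist_le_edist_of_mem hz)
      rw [edist_dist, Real.dist_eq,
        ENNReal.lt_ofReal_iff_toReal_lt (by simp)] at h1
      simp only [ENNReal.coe_toReal] at h1
      rcases lt_abs.mp h1 with h | h
      · left; linarith
      · right; linarith
    set c : ℝ := H.toReal with hcdef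
    have hcnn : 0 ≤ c := ENNReal.toReal_nonneg
    have hfar : ∀ s : ℝ, EMetric.infEdist s X ≤ ENNReal.ofReal c := by
      intro s; rw [hcdef, ENNReal.ofReal_toReal hfin]; exact hle s
    have hnotall : ∀ s : ℝ, ¬ (∀ z ∈ X, c + 1 ≤ |s - z|) := by
      intro s hall
      have h1 : ENNReal.ofReal (c + 1) ≤ EMetric.infEdist s X := by
        refine EMetric.le_infEdist.mpr ?_
        intro z hz
        rw [edist_dist, Real.dist_eq]
        exact ENNReal.ofReal_le_ofReal (hall z hz)
      have h2 : ENNReal.ofReal (c + 1) ≤ ENNReal.ofReal c := h1.trans (hfar s)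
      rw [ENNReal.ofReal_le_ofReal_iff hcnn] at h2
      linarith
    -- get points on both sides
    have hx : ∃ z ∈ X, z < r - (t:ℝ) := by
      by_contra hcon
      push_neg at hcon
      apply hnotall (r - (t:ℝ) - c - 1)
      intro z hz
      have h2 : r + (t:ℝ) < z := (hside z hz).resolve_left (not_lt.mpr (hcon z hz)).elim
      · rw [abs_sub_comm, abs_of_nonneg (by have := t.coe_nonneg; linarith)]
        have := t.coe_nonneg; linarith
    have hy : ∃ z ∈ X, r + (t:ℝ) < z := by
      by_contra hcon
      push_neg at hcon
      apply hnotall (r + (t:ℝ) + c + 1)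
      intro z hz
      have h2 : z < r - (t:ℝ) := (hside z hz).resolve_right (not_lt.mpr (hcon z hz))
      rw [abs_of_nonneg (by have := t.coe_nonneg; linarith)]
      have := t.coe_nonneg; linarith
    obtain ⟨xv, hxX, hxlt⟩ := hx
    obtain ⟨yv, hyX, hylt⟩ := hy
    set x : X := ⟨xv, hxX⟩
    set y : X := ⟨yv, hyX⟩
    have hdist : 2 * (t : ℝ≥0∞) ≤ ultraDist x y := by
      refine le_iInf fun n => le_iInf fun f => le_iInf fun hf0 => le_iInf fun hfl => ?_
      -- crossing argument
      have hfin' : ∀ m : ℕ, min m n < n + 1 := fun m => Nat.lt_succ_of_le (Nat.min_le_right m n)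
      set p : ℕ → Prop := fun m => ((f ⟨min m n, hfin' m⟩ : ℝ) < r - (t:ℝ)) with hpdef
      have hp0 : p 0 := by
        have h0 : (⟨min 0 n, hfin' 0⟩ : Fin (n+1)) = 0 := by
          apply Fin.ext; simp
        simp only [hpdef, h0, hf0]
        exact hxlt
      have hpn : ¬ p n := by
        have h0 : (⟨min n n, hfin' n⟩ : Fin (n+1)) = Fin.last n := by
          apply Fin.ext; simp
        simp only [hpdef, h0, hfl]
        push_neg
        have := t.coe_nonneg; linarith
      obtain ⟨k, hk, hpk, hpk1⟩ := myAux_nat_step n hp0 hpn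
      set i : Fin n := ⟨k, hk⟩ with hidef
      have hc1 : (⟨min k n, hfin' k⟩ : Fin (n+1)) = i.castSucc := by
        apply Fin.ext; simp [hidef, Nat.min_eq_left hk.le]
      have hc2 : (⟨min (k+1) n, hfin' (k+1)⟩ : Fin (n+1)) = i.succ := by
        apply Fin.ext; simp [hidef, Nat.min_eq_left hk]
      rw [hpdef] at hpk hpk1
      rw [hc1] at hpk
      have hpk1' : ¬ ((f i.succ : ℝ) < r - (t:ℝ)) := by
        rw [← hc2]; exact hpk1
      have hv : r + (t:ℝ) < (f i.succ : ℝ) :=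
        (hside _ (f i.succ).2).resolve_left hpk1'
      have hedge : 2 * (t : ℝ≥0∞) ≤ edist (f i.castSucc) (f i.succ) := by
        have : edist (f i.castSucc) (f i.succ) =
            ENNReal.ofReal |(f i.castSucc : ℝ) - (f i.succ : ℝ)| := by
          rw [Subtype.edist_eq, edist_dist, Real.dist_eq]
        rw [this]
        have habs : 2 * (t:ℝ) ≤ |(f i.castSucc : ℝ) - (f i.succ : ℝ)| := by
          rw [abs_sub_comm]
          calc 2 * (t:ℝ) ≤ (f i.succ : ℝ) - (f i.castSucc : ℝ) := by linarith
            _ ≤ |(f i.succ : ℝ) - (f i.castSucc : ℝ)| := le_abs_self _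
        calc 2 * (t : ℝ≥0∞) = ENNReal.ofReal (2 * (t:ℝ)) := by
              rw [ENNReal.ofReal_mul (by norm_num), ENNReal.ofReal_coe_nnreal]
              norm_num
          _ ≤ _ := ENNReal.ofReal_le_ofReal habs
      exact hedge.trans (le_iSup (fun j : Fin n => edist (f j.castSucc) (f j.succ)) i)
    calc 2 * (t : ℝ≥0∞) ≤ ultraDist x y := hdist
      _ ≤ ultraDiam X := le_iSup_of_le x (le_iSup_of_le y le_rfl)
  -- conclude
  rcases eq_or_ne H 0 with h0 | h0
  · simp [h0]
  apply ENNReal.le_of_forall_nnreal_lt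
  intro q hq
  have hq2 : (q : ℝ≥0∞) / 2 < H := by
    rw [ENNReal.div_lt_iff (by norm_num) (by norm_num)]
    rwa [mul_comm] at hq
  have : ((q / 2 : ℝ≥0) : ℝ≥0∞) < H := by
    rw [ENNReal.coe_div (by norm_num)]
    exact_mod_cast hq2
  have hres := key (q / 2) this
  calc (q : ℝ≥0∞) = 2 * ((q / 2 : ℝ≥0) : ℝ≥0∞) := by
        rw [ENNReal.coe_div (by norm_num)]
        push_cast
        rw [ENNReal.mul_div_cancel' (by norm_num) (by norm_num)]
    _ ≤ ultraDiam X := hres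

/-- for a nonempty `X ⊆ ℝ` at finite Hausdorff distance from `ℝ`,
the ultrametric pseudodiameter of `X` equals twice the Hausdorff distance. -/
theorem ultraDiam_eq_two_hausdorff (X : Set ℝ) (hX : X.Nonempty)
    (hfin : EMetric.hausdorffEdist X (Set.univ : Set ℝ) ≠ ⊤) :
    ultraDiam X = 2 * EMetric.hausdorffEdist X (Set.univ : Set ℝ) :=
  le_antisymm (myAux_upper X hfin) (myAux_lower X hfin)

end
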